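/- Geometric decrease of the greedy optimality gap. Let f : Finset S → ℝ be submodular, monotone and normalized on a finite set S, let ρ be a budget with 1 ≤ ρ ≤ |S|, and let A_0, A_1, …, A_ρ be a greedy sequence for f. Then for every O ⊆ S with |O| ≤ ρ and every s with 0 ≤ s < ρ: f(O) − f(A_{s+1}) ≤ (1 − 1/ρ) · (f(O) − f(A_s)). -/

import Mathlib

/-!
STATEMENT 15 (geometric decrease of the greedy optimality gap).
Let `f` be submodular, monotone and normalized on the subsets of a finite set `S`,
let `ρ` be a budget with `1 ≤ ρ ≤ |S|`, and let `A 0 = ∅, A 1, …, A ρ` be a greedy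
sequence for `f`. Then for every `O ⊆ S` with `|O| ≤ ρ` and every `s < ρ`:
`f O - f (A (s+1)) ≤ (1 - 1/ρ) * (f O - f (A s))`.
-/
theorem greedy_gap_geometric_decrease {α : Type*} [DecidableEq α]
    (S : Finset α) (f : Finset α → ℝ)
    (hsub : ∀ A B : Finset α, A ⊆ B → B ⊆ S → ∀ x ∈ S, x ∉ B →
      f (A ∪ {x}) - f A ≥ f (B ∪ {x}) - f B)
    (hmono : ∀ A B : Finset α, A ⊆ B → B ⊆ S → f A ≤ f B)
    (hnorm : f ∅ = 0)
    (ρ : ℕ) (hρ1 : 1 ≤ ρ) (hρS : ρ ≤ S.card)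
    (A : ℕ → Finset α) (x : ℕ → α)
    (hA0 : A 0 = ∅)
    (hx : ∀ s < ρ, x s ∈ S ∧ x s ∉ A s)
    (hAsucc : ∀ s < ρ, A (s + 1) = A s ∪ {x s})
    (hgreedy : ∀ s < ρ, ∀ y ∈ S, y ∉ A s →
      f (A s ∪ {y}) ≤ f (A s ∪ {x s})) :
    ∀ O : Finset α, O ⊆ S → O.card ≤ ρ → ∀ s < ρ,
      f O - f (A (s + 1)) ≤ (1 - 1 / (ρ : ℝ)) * (f O - f (A s)) := by
  have hAsub : ∀ s, s ≤ ρ → A s ⊆ S := by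
    intro s
    induction s with
    | zero => intro _; simp [hA0]
    | succ n ih =>
      intro h
      have hn : n < ρ := h
      rw [hAsucc n hn]
      intro y hy
      rcases Finset.mem_union.1 hy with h1 | h1
      · exact ih (le_of_lt hn) h1
      · rw [Finset.mem_singleton] at h1; subst h1; exact (hx n hn).1
  have key : ∀ (B : Finset α), B ⊆ S → ∀ T : Finset α, T ⊆ S → Disjoint T B →
      f (B ∪ T) ≤ f B + ∑ y ∈ T, (f (B ∪ {y}) - f B) := by
    intro B hB T
    induction T using Finset.induction_on with
    | empty => simp
    | insert a T' ha ih =>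
      intro hTS hdisj
      have hT'S : T' ⊆ S := (Finset.insert_subset_iff.1 hTS).2
      have haS : a ∈ S := (Finset.insert_subset_iff.1 hTS).1
      have haB : a ∉ B := (Finset.disjoint_insert_left.1 hdisj).1
      have hdisj' : Disjoint T' B := (Finset.disjoint_insert_left.1 hdisj).2
      have haBT : a ∉ B ∪ T' := by simp [haB, ha]
      have hs1 := hsub B (B ∪ T') Finset.subset_union_left
        (Finset.union_subset hB hT'S) a haS haBT
      have heq : B ∪ insert a T' = (B ∪ T') ∪ {a} := by
        ext z
        simp only [Finset.mem_union, Finset.mem_insert, Finset.mem_singleton]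
        tauto
      rw [heq, Finset.sum_insert ha]
      have hih := ih hT'S hdisj'
      linarith
  intro O hO hOcard s hs
  have hAs : A s ⊆ S := hAsub s (le_of_lt hs)
  have hAs1 : A (s + 1) ⊆ S := hAsub (s + 1) hs
  set g := f (A (s + 1)) - f (A s) with hg
  have hg0 : 0 ≤ g := by
    have := hmono (A s) (A (s + 1))
      (by rw [hAsucc s hs]; exact Finset.subset_union_left) hAs1
    linarith
  have hbound : ∀ y ∈ O \ A s, f (A s ∪ {y}) - f (A s) ≤ g := by
    intro y hy
    rw [Finset.mem_sdiff] at hy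
    have := hgreedy s hs y (hO hy.1) hy.2
    rw [hg, hAsucc s hs]; linarith
  have hTS : O \ A s ⊆ S := fun z hz => hO (Finset.mem_sdiff.1 hz).1
  have hsum := key (A s) hAs (O \ A s) hTS Finset.sdiff_disjoint
  have hcard : ((O \ A s).card : ℝ) ≤ (ρ : ℝ) := by
    exact_mod_cast le_trans (Finset.card_le_card Finset.sdiff_subset) hOcard
  have hsum2 : ∑ y ∈ O \ A s, (f (A s ∪ {y}) - f (A s)) ≤ ((O \ A s).card : ℝ) * g :=
    calc ∑ y ∈ O \ A s, (f (A s ∪ {y}) - f (A s)) ≤ ∑ _y ∈ O \ A s, g :=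
          Finset.sum_le_sum hbound
      _ = ((O \ A s).card : ℝ) * g := by rw [Finset.sum_const, nsmul_eq_mul]
  have hfO : f O ≤ f (A s ∪ (O \ A s)) := by
    apply hmono O _ _ (Finset.union_subset hAs hTS)
    intro z hz
    rw [Finset.mem_union, Finset.mem_sdiff]
    by_cases h : z ∈ A s
    · exact Or.inl h
    · exact Or.inr ⟨hz, h⟩
  have hD : f O - f (A s) ≤ (ρ : ℝ) * g := by
    have : ((O \ A s).card : ℝ) * g ≤ (ρ : ℝ) * g :=
      mul_le_mul_of_nonneg_right hcard hg0
    linarith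
  have hρpos : (0 : ℝ) < (ρ : ℝ) := by exact_mod_cast hρ1
  have hdiv : (f O - f (A s)) / (ρ : ℝ) ≤ g := by
    rw [div_le_iff₀ hρpos]; linarith
  have hexpand : (1 - 1 / (ρ : ℝ)) * (f O - f (A s))
      = (f O - f (A s)) - (f O - f (A s)) / (ρ : ℝ) := by ring
  rw [hexpand]
  linarith
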